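/- The 2-form ω_ε = 3ε(x² − t)(dt∧dx + dy∧dz) + 2y dt∧dy + (2y − 6εxy) dz∧dx − (2z + 3εy) dt∧dz − 2z dx∧dy on ℝ⁴ is closed, and its zero set equals {(t,x,y,z) : x² = t, y = 0, z = 0}, which coincides with the critical point set of the cusp model f(t,x,y,z) = (t, x³ − 3xt + y² − z²). -/

import Mathlib

noncomputable def pT (f : ℝ → ℝ → ℝ → ℝ → ℝ) (t x y z : ℝ) : ℝ :=
  deriv (fun u => f u x y z) t
noncomputable def pX (f : ℝ → ℝ → ℝ → ℝ → ℝ) (t x y z : ℝ) : ℝ :=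
  deriv (fun u => f t u y z) x
noncomputable def pY (f : ℝ → ℝ → ℝ → ℝ → ℝ) (t x y z : ℝ) : ℝ :=
  deriv (fun u => f t x u z) y
noncomputable def pZ (f : ℝ → ℝ → ℝ → ℝ → ℝ) (t x y z : ℝ) : ℝ :=
  deriv (fun u => f t x y u) z

/-! Coefficients of
`ω_ε = 3ε(x²−t)(dt∧dx + dy∧dz) + 2y dt∧dy + (2y − 6εxy) dz∧dx
       − (2z + 3εy) dt∧dz − 2z dx∧dy`
in the basis `dt∧dx, dt∧dy, dt∧dz, dx∧dy, dx∧dz, dy∧dz`. -/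
def Ctx (ε : ℝ) : ℝ → ℝ → ℝ → ℝ → ℝ := fun t x _ _ => 3 * ε * (x ^ 2 - t)
def Cty (ε : ℝ) : ℝ → ℝ → ℝ → ℝ → ℝ := fun _ _ y _ => 2 * y
def Ctz (ε : ℝ) : ℝ → ℝ → ℝ → ℝ → ℝ := fun _ _ y z => -(2 * z + 3 * ε * y)
def Cxy (ε : ℝ) : ℝ → ℝ → ℝ → ℝ → ℝ := fun _ _ _ z => -2 * z
def Cxz (ε : ℝ) : ℝ → ℝ → ℝ → ℝ → ℝ := fun _ x y _ => -(2 * y - 6 * ε * x * y)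
def Cyz (ε : ℝ) : ℝ → ℝ → ℝ → ℝ → ℝ := fun t x _ _ => 3 * ε * (x ^ 2 - t)

open ContinuousLinearMap in
noncomputable def π1 : (ℝ × ℝ × ℝ × ℝ) →L[ℝ] ℝ := fst ℝ ℝ (ℝ×ℝ×ℝ)
open ContinuousLinearMap in
noncomputable def π2 : (ℝ × ℝ × ℝ × ℝ) →L[ℝ] ℝ := (fst ℝ ℝ (ℝ×ℝ)).comp (snd ℝ ℝ (ℝ×ℝ×ℝ))
open ContinuousLinearMap in
noncomputable def π3 : (ℝ × ℝ × ℝ × ℝ) →L[ℝ] ℝ :=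
  ((fst ℝ ℝ ℝ).comp (snd ℝ ℝ (ℝ×ℝ))).comp (snd ℝ ℝ (ℝ×ℝ×ℝ))
open ContinuousLinearMap in
noncomputable def π4 : (ℝ × ℝ × ℝ × ℝ) →L[ℝ] ℝ :=
  ((snd ℝ ℝ ℝ).comp (snd ℝ ℝ (ℝ×ℝ))).comp (snd ℝ ℝ (ℝ×ℝ×ℝ))
noncomputable def D (a b c d : ℝ) : (ℝ × ℝ × ℝ × ℝ) →L[ℝ] ℝ × ℝ :=
  π1.prod (a • π1 + b • π2 + c • π3 + d • π4)

lemma D_apply (a b c d : ℝ) (v : ℝ × ℝ × ℝ × ℝ) :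
    D a b c d v = (v.1, a * v.1 + b * v.2.1 + c * v.2.2.1 + d * v.2.2.2) := by
  simp [D, π1, π2, π3, π4, mul_comm]

lemma hasD (p : ℝ × ℝ × ℝ × ℝ) :
    HasFDerivAt (fun q : ℝ × ℝ × ℝ × ℝ =>
      ((q.1, q.2.1 ^ 3 - 3 * q.2.1 * q.1 + q.2.2.1 ^ 2 - q.2.2.2 ^ 2) : ℝ × ℝ))
      (D (-3*p.2.1) (3*p.2.1^2 - 3*p.1) (2*p.2.2.1) (-2*p.2.2.2)) p := by
  have h1 : HasFDerivAt (fun q : ℝ × ℝ × ℝ × ℝ => q.1) π1 p := hasFDerivAt_fst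
  have h2 : HasFDerivAt (fun q : ℝ × ℝ × ℝ × ℝ => q.2.1) π2 p := hasFDerivAt_snd.fst
  have h3 : HasFDerivAt (fun q : ℝ × ℝ × ℝ × ℝ => q.2.2.1) π3 p := by
    unfold π3; exact (hasFDerivAt_fst.comp p.2 hasFDerivAt_snd).comp p hasFDerivAt_snd
  have h4 : HasFDerivAt (fun q : ℝ × ℝ × ℝ × ℝ => q.2.2.2) π4 p := by
    unfold π4; exact (hasFDerivAt_snd.comp p.2 hasFDerivAt_snd).comp p hasFDerivAt_snd
  have hg : HasFDerivAt
      (fun q : ℝ × ℝ × ℝ × ℝ => q.2.1 ^ 3 - 3 * q.2.1 * q.1 + q.2.2.1 ^ 2 - q.2.2.2 ^ 2)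
      ((-3*p.2.1) • π1 + (3*p.2.1^2 - 3*p.1) • π2 + (2*p.2.2.1) • π3 + (-2*p.2.2.2) • π4) p := by
    have heq : (fun q : ℝ × ℝ × ℝ × ℝ => q.2.1 ^ 3 - 3 * q.2.1 * q.1 + q.2.2.1 ^ 2 - q.2.2.2 ^ 2)
        = (fun q : ℝ × ℝ × ℝ × ℝ => q.2.1 * q.2.1 * q.2.1 - 3 * q.2.1 * q.1 + q.2.2.1 * q.2.2.1
            - q.2.2.2 * q.2.2.2) := by
      funext q; ring
    rw [heq]
    have H := ((((h2.mul h2).mul h2).sub ((h2.const_mul 3).mul h1)).add (h3.mul h3)).sub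
      (h4.mul h4)
    refine H.congr_fderiv ?_
    refine ContinuousLinearMap.ext fun v => ?_
    simp [π1, π2, π3, π4]
    ring
  exact HasFDerivAt.prodMk h1 hg

lemma rank_two (a b c d : ℝ) (h : b ≠ 0 ∨ c ≠ 0 ∨ d ≠ 0) :
    LinearMap.rank (D a b c d).toLinearMap = 2 := by
  have hs : Function.Surjective (D a b c d) := by
    intro w
    rcases h with hb | hc | hd
    · exact ⟨(w.1, ((w.2 - a * w.1)/b, 0, 0)), by
        simp [D_apply, hb]; field_simp; simp⟩
    · exact ⟨(w.1, (0, (w.2 - a * w.1)/c, 0)), by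
        simp [D_apply, hc]; field_simp; simp⟩
    · exact ⟨(w.1, (0, 0, (w.2 - a * w.1)/d)), by
        simp [D_apply, hd]; field_simp; simp⟩
  have ht : LinearMap.range (D a b c d).toLinearMap = ⊤ := LinearMap.range_eq_top.2 hs
  rw [LinearMap.rank, ht, rank_top]
  rw [rank_prod', Module.rank_self]
  norm_num

lemma rank_one (a : ℝ) :
    LinearMap.rank (D a 0 0 0).toLinearMap < 2 := by
  have hle : LinearMap.range (D a 0 0 0).toLinearMap ≤ ℝ ∙ ((1:ℝ), a) := by
    rintro w ⟨v, rfl⟩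
    refine Submodule.mem_span_singleton.2 ⟨v.1, ?_⟩
    simp [D_apply, Prod.ext_iff, mul_comm]
  calc LinearMap.rank (D a 0 0 0).toLinearMap
      ≤ Module.rank ℝ (ℝ ∙ ((1:ℝ), a)) := Submodule.rank_mono hle
    _ ≤ 1 := by simpa using rank_span_le (R := ℝ) {((1:ℝ), a)}
    _ < 2 := by norm_num

/-- The cusp-model near-symplectic form `ω_ε` is closed, and its zero set is
exactly `{x² = t, y = 0, z = 0}`, the critical point set of the cusp model
`f(t,x,y,z) = (t, x³ − 3xt + y² − z²)`. -/
theorem stmt10 (ε : ℝ) (hε : 0 < ε) :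
    (∀ t x y z : ℝ,
      pT (Cxy ε) t x y z - pX (Cty ε) t x y z + pY (Ctx ε) t x y z = 0 ∧
      pT (Cxz ε) t x y z - pX (Ctz ε) t x y z + pZ (Ctx ε) t x y z = 0 ∧
      pT (Cyz ε) t x y z - pY (Ctz ε) t x y z + pZ (Cty ε) t x y z = 0 ∧
      pX (Cyz ε) t x y z - pY (Cxz ε) t x y z + pZ (Cxy ε) t x y z = 0) ∧
    {p : ℝ × ℝ × ℝ × ℝ |
        Ctx ε p.1 p.2.1 p.2.2.1 p.2.2.2 = 0 ∧ Cty ε p.1 p.2.1 p.2.2.1 p.2.2.2 = 0 ∧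
        Ctz ε p.1 p.2.1 p.2.2.1 p.2.2.2 = 0 ∧ Cxy ε p.1 p.2.1 p.2.2.1 p.2.2.2 = 0 ∧
        Cxz ε p.1 p.2.1 p.2.2.1 p.2.2.2 = 0 ∧ Cyz ε p.1 p.2.1 p.2.2.1 p.2.2.2 = 0} =
      {p : ℝ × ℝ × ℝ × ℝ | p.2.1 ^ 2 = p.1 ∧ p.2.2.1 = 0 ∧ p.2.2.2 = 0} ∧
    {p : ℝ × ℝ × ℝ × ℝ | p.2.1 ^ 2 = p.1 ∧ p.2.2.1 = 0 ∧ p.2.2.2 = 0} =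
      {p : ℝ × ℝ × ℝ × ℝ |
        LinearMap.rank (fderiv ℝ
          (fun q : ℝ × ℝ × ℝ × ℝ =>
            ((q.1, q.2.1 ^ 3 - 3 * q.2.1 * q.1 + q.2.2.1 ^ 2 - q.2.2.2 ^ 2) : ℝ × ℝ))
          p).toLinearMap < 2} := by
  refine ⟨?_, ?_, ?_⟩
  · intro t x y z
    refine ⟨?_, ?_, ?_, ?_⟩
    · have h1 : pT (Cxy ε) t x y z = 0 := by unfold pT Cxy; simp
      have h2 : pX (Cty ε) t x y z = 0 := by unfold pX Cty; simp
      have h3 : pY (Ctx ε) t x y z = 0 := by unfold pY Ctx; simp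
      rw [h1, h2, h3]; ring
    · have h1 : pT (Cxz ε) t x y z = 0 := by unfold pT Cxz; simp
      have h2 : pX (Ctz ε) t x y z = 0 := by unfold pX Ctz; simp
      have h3 : pZ (Ctx ε) t x y z = 0 := by unfold pZ Ctx; simp
      rw [h1, h2, h3]; ring
    · have h1 : pT (Cyz ε) t x y z = 3*ε*(-1) := by
        unfold pT Cyz
        exact (((hasDerivAt_id t).const_sub (x^2)).const_mul (3*ε)).deriv
      have h2 : pY (Ctz ε) t x y z = -(3*ε) := by
        unfold pY Ctz
        simpa using ((((hasDerivAt_id y).const_mul (3*ε)).const_add (2*z)).neg).deriv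
      have h3 : pZ (Cty ε) t x y z = 0 := by unfold pZ Cty; simp
      rw [h1, h2, h3]; ring
    · have h1 : pX (Cyz ε) t x y z = 3*ε*(2*x) := by
        unfold pX Cyz
        simpa using (((hasDerivAt_pow 2 x).sub_const t).const_mul (3*ε)).deriv
      have h2 : pY (Cxz ε) t x y z = -(2 - 6*ε*x) := by
        unfold pY Cxz
        convert ((((hasDerivAt_id y).const_mul 2).sub
          ((hasDerivAt_id y).const_mul (6*ε*x))).neg).deriv using 1 <;> first | rfl | simp
      have h3 : pZ (Cxy ε) t x y z = -2 := by
        unfold pZ Cxy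
        simpa using ((hasDerivAt_id z).const_mul (-2)).deriv
      rw [h1, h2, h3]; ring
  · ext p
    obtain ⟨t, x, y, z⟩ := p
    simp only [Set.mem_setOf_eq, Ctx, Cty, Ctz, Cxy, Cxz, Cyz]
    constructor
    · rintro ⟨h1, h2, h3, h4, -, -⟩
      have hy : y = 0 := by linarith
      have hz : z = 0 := by linarith
      have hx : x ^ 2 - t = 0 := by
        rcases mul_eq_zero.1 h1 with h | h
        · nlinarith
        · exact h
      exact ⟨by linarith, hy, hz⟩
    · rintro ⟨h1, h2, h3⟩
      subst h2; subst h3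
      refine ⟨by rw [h1]; ring, by ring, by ring, by ring, by ring, by rw [h1]; ring⟩
  · ext p
    obtain ⟨t, x, y, z⟩ := p
    have hf := (hasD (t, x, y, z)).fderiv
    simp only [Set.mem_setOf_eq, hf]
    constructor
    · rintro ⟨h1, h2, h3⟩
      have hb : 3*(x:ℝ)^2 - 3*t = 0 := by nlinarith [h1]
      have : D (-3*x) (3*x^2-3*t) (2*y) (-2*z) = D (-3*x) 0 0 0 := by
        simp only [h2, h3]; rw [hb]; norm_num
      rw [show ((t,x,y,z) : ℝ×ℝ×ℝ×ℝ).2.1 = x from rfl] at *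
      simp only [this]
      exact rank_one _
    · intro hr
      by_contra hc
      push_neg at hc
      have hne : (3*x^2 - 3*t ≠ 0) ∨ (2*y ≠ 0) ∨ (-2*z ≠ 0) := by
        by_contra hall
        push_neg at hall
        obtain ⟨hb, hcc, hd⟩ := hall
        have hx2 : x ^ 2 = t := by nlinarith
        have hy : y = 0 := by linarith
        have hz : z = 0 := by linarith
        exact (hc hx2 hy) hz
      have := rank_two (-3*x) _ _ _ hne
      simp only [this] at hr
      exact absurd hr (lt_irrefl _)
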